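/- Let L > 2, let r ≥ 1, let α_1, …, α_r ∈ ℂ and w_1, …, w_r ∈ ℂ, and let B_L ∈ ℂ^{2^L×2^L} be the circulant whose first column has entries (B_L)_{j,0} = ∑_{t=1}^{r} α_t w_t^j for j = 0, …, 2^L − 1 (so (B_L)_{i,j} = ∑_t α_t w_t^{(i−j) mod 2^L}). Then B_L admits a QTT representation with ranks (2, r+1, r+1, …, r+1); in particular, the first reshaped matrix satisfies rank((B_L)̂_1) ≤ 2 and, for every k ∈ {2, …, L−1}, the k-th reshaped matrix satisfies rank((B_L)̂_k) ≤ r + 1. -/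

import Mathlib

open Finset

private lemma aux_mod (a d n₁ n₂ : ℕ) (h₁ : 0 < n₁) (hd : d < n₂) :
    (a * n₂ + d) % (n₁ * n₂) = (a % n₁) * n₂ + d := by
  have h1 : a * n₂ + d = (a % n₁) * n₂ + d + (n₁ * n₂) * (a / n₁) := by
    conv_lhs => rw [← Nat.div_add_mod a n₁]
    ring
  rw [h1, Nat.add_mul_mod_self_left]
  apply Nat.mod_eq_of_lt
  have h2 : a % n₁ < n₁ := Nat.mod_lt _ h₁
  calc (a % n₁) * n₂ + d < (a % n₁) * n₂ + n₂ := by omega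
    _ = (a % n₁ + 1) * n₂ := by ring
    _ ≤ n₁ * n₂ := Nat.mul_le_mul_right _ (by omega)

private lemma aux_mod_shift (x n : ℕ) (hx : 1 ≤ x) (hn : 0 < n) :
    (x % n + n - 1) % n = (x - 1) % n := by
  have h1 : x % n + n - 1 + n * (x / n) = x + n - 1 := by
    have := Nat.div_add_mod x n
    omega
  have h2 : (x % n + n - 1 + n * (x / n)) % n = (x % n + n - 1) % n := by
    rw [Nat.add_mul_mod_self_left]
  rw [← h2, h1]
  have h3 : x + n - 1 = x - 1 + n := by omega
  rw [h3, Nat.add_mod_right]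

/-- QTT ranks of the circulant `B_L ∈ ℂ^{2^L × 2^L}` whose first column is
`(B_L)_j = ∑_{t=1}^r α_t w_t^j`: the first reshaped matrix has rank at most `2` and the
`k`-th reshaped matrix (for `2 ≤ k ≤ L-1`) has rank at most `r + 1`, i.e. `B_L` admits a
QTT representation with ranks `(2, r+1, …, r+1)`. -/
theorem stmt18 (L : ℕ) (hL : 2 < L) (r : ℕ) (hr : 1 ≤ r)
    (α w : ℕ → ℂ)
    (B : Matrix (ZMod (2 ^ L)) (ZMod (2 ^ L)) ℂ)
    (hB : ∀ i j : ZMod (2 ^ L), B i j =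
      ∑ t ∈ Finset.range r, α t * w t ^ ((i - j).val)) :
    ∀ k : ℕ, 1 ≤ k → k ≤ L - 1 →
      ∀ Bhat : Matrix (Fin (2 ^ k) × Fin (2 ^ k)) (Fin (2 ^ (L - k)) × Fin (2 ^ (L - k))) ℂ,
        (∀ (i₁ j₁ : Fin (2 ^ k)) (i₂ j₂ : Fin (2 ^ (L - k))),
          Bhat (i₁, j₁) (i₂, j₂)
            = B ((((i₁ : ℕ) * 2 ^ (L - k) + (i₂ : ℕ) : ℕ) : ZMod (2 ^ L)))
                ((((j₁ : ℕ) * 2 ^ (L - k) + (j₂ : ℕ) : ℕ) : ZMod (2 ^ L)))) →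
        Matrix.rank Bhat ≤ if k = 1 then 2 else r + 1 := by
  intro k hk1 hk2
  set N₁ : ℕ := 2 ^ k with hN₁def
  set N₂ : ℕ := 2 ^ (L - k) with hN₂def
  intro Bhat hBhat
  have hN₁pos : 0 < N₁ := Nat.pow_pos (by norm_num)
  have hN₂pos : 0 < N₂ := Nat.pow_pos (by norm_num)
  have hN₂two : 2 ≤ N₂ := by
    have h1 : 1 ≤ L - k := by omega
    calc 2 = 2 ^ 1 := rfl
      _ ≤ 2 ^ (L - k) := Nat.pow_le_pow_right (by norm_num) h1
  have hNfact : 2 ^ L = N₁ * N₂ := by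
    rw [hN₁def, hN₂def, ← pow_add]
    congr 1
    omega
  have hNpos : 0 < 2 ^ L := Nat.pow_pos (by norm_num)
  haveI : NeZero (2 ^ L) := ⟨hNpos.ne'⟩
  -- exponent function
  set E : ℕ → Fin N₂ → Fin N₂ → ℕ := fun c i₂ j₂ =>
    if (j₂ : ℕ) ≤ (i₂ : ℕ) then c * N₂ + ((i₂ : ℕ) - (j₂ : ℕ))
    else ((c + N₁ - 1) % N₁) * N₂ + ((i₂ : ℕ) + N₂ - (j₂ : ℕ)) with hEdef
  -- key value computation
  have key : ∀ (i₁ j₁ : Fin N₁) (i₂ j₂ : Fin N₂),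
      ((((i₁ : ℕ) * N₂ + (i₂ : ℕ) : ℕ) : ZMod (2 ^ L))
        - (((j₁ : ℕ) * N₂ + (j₂ : ℕ) : ℕ) : ZMod (2 ^ L))).val
      = E (((i₁ : ℕ) + N₁ - (j₁ : ℕ)) % N₁) i₂ j₂ := by
    intro i₁ j₁ i₂ j₂
    have hj₁ : (j₁ : ℕ) < N₁ := j₁.isLt
    have hi₁ : (i₁ : ℕ) < N₁ := i₁.isLt
    have hj₂ : (j₂ : ℕ) < N₂ := j₂.isLt
    have hi₂ : (i₂ : ℕ) < N₂ := i₂.isLt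
    have hble : (j₁ : ℕ) * N₂ + (j₂ : ℕ) ≤ (i₁ : ℕ) * N₂ + (i₂ : ℕ) + N₁ * N₂ := by
      have h1 : (j₁ : ℕ) * N₂ ≤ (N₁ - 1) * N₂ := Nat.mul_le_mul_right _ (by omega)
      have h2 : (N₁ - 1) * N₂ + N₂ = N₁ * N₂ := by
        rw [← Nat.succ_mul]; congr 1; omega
      omega
    have hble' : (j₁ : ℕ) * N₂ + (j₂ : ℕ) ≤ (i₁ : ℕ) * N₂ + (i₂ : ℕ) + 2 ^ L := by
      rw [hNfact]; exact hble
    have hcast : ((((i₁ : ℕ) * N₂ + (i₂ : ℕ)) + 2 ^ L - ((j₁ : ℕ) * N₂ + (j₂ : ℕ)) : ℕ)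
            : ZMod (2 ^ L))
        = ((((i₁ : ℕ) * N₂ + (i₂ : ℕ) : ℕ) : ZMod (2 ^ L))
          - (((j₁ : ℕ) * N₂ + (j₂ : ℕ) : ℕ) : ZMod (2 ^ L))) := by
      rw [Nat.cast_sub hble']
      congr 1
      rw [Nat.cast_add, ZMod.natCast_self, add_zero]
    rw [← hcast, ZMod.val_natCast]
    have hxle : (j₁ : ℕ) ≤ (i₁ : ℕ) + N₁ := by omega
    by_cases hij : (j₂ : ℕ) ≤ (i₂ : ℕ)
    · have h3 : ((i₁ : ℕ) * N₂ + (i₂ : ℕ)) + 2 ^ L - ((j₁ : ℕ) * N₂ + (j₂ : ℕ))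
          = ((i₁ : ℕ) + N₁ - (j₁ : ℕ)) * N₂ + ((i₂ : ℕ) - (j₂ : ℕ)) := by
        rw [hNfact]
        zify [hble, hxle, hij]
        ring
      rw [h3, hNfact, aux_mod _ _ _ _ hN₁pos (by omega)]
      simp only [hEdef, if_pos hij]
    · push_neg at hij
      have hx1 : 1 ≤ (i₁ : ℕ) + N₁ - (j₁ : ℕ) := by omega
      have h3 : ((i₁ : ℕ) * N₂ + (i₂ : ℕ)) + 2 ^ L - ((j₁ : ℕ) * N₂ + (j₂ : ℕ))
          = ((i₁ : ℕ) + N₁ - (j₁ : ℕ) - 1) * N₂ + ((i₂ : ℕ) + N₂ - (j₂ : ℕ)) := by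
        rw [hNfact]
        zify [hble, hxle, hx1, (by omega : (j₂ : ℕ) ≤ (i₂ : ℕ) + N₂)]
        ring
      rw [h3, hNfact, aux_mod _ _ _ _ hN₁pos (by omega)]
      simp only [hEdef, if_neg (by omega : ¬ ((j₂ : ℕ) ≤ (i₂ : ℕ)))]
      congr 1
      rw [aux_mod_shift _ _ hx1 hN₁pos]
  -- the factorization Bhat = P * F
  set cfun : Fin N₁ × Fin N₁ → Fin N₁ :=
    fun p => ⟨((p.1 : ℕ) + N₁ - (p.2 : ℕ)) % N₁, Nat.mod_lt _ hN₁pos⟩ with hcfun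
  set P : Matrix (Fin N₁ × Fin N₁) (Fin N₁) ℂ := fun p c => if cfun p = c then 1 else 0 with hP
  set F : Matrix (Fin N₁) (Fin N₂ × Fin N₂) ℂ :=
    fun c q => ∑ t ∈ Finset.range r, α t * w t ^ E (c : ℕ) q.1 q.2 with hF
  have hBPF : Bhat = P * F := by
    ext ⟨i₁, j₁⟩ ⟨i₂, j₂⟩
    rw [hBhat, hB, Matrix.mul_apply]
    simp only [hP, ite_mul, one_mul, zero_mul]
    rw [Finset.sum_ite_eq, if_pos (Finset.mem_univ _)]
    rw [hF]
    simp only [hcfun, Fin.val_mk]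
    exact Finset.sum_congr rfl fun t _ => by rw [key i₁ j₁ i₂ j₂]
  by_cases hk : k = 1
  · rw [if_pos hk, hBPF]
    calc (P * F).rank ≤ F.rank := Matrix.rank_mul_le_right P F
      _ ≤ Fintype.card (Fin N₁) := Matrix.rank_le_card_height F
      _ = 2 := by simp [hN₁def, hk]
  · rw [if_neg hk]
    -- second factorization F = G * H
    set coef : ℕ → Fin N₂ → Fin N₂ → ℂ := fun t i₂ j₂ =>
      if (j₂ : ℕ) ≤ (i₂ : ℕ) then w t ^ ((i₂ : ℕ) - (j₂ : ℕ))
      else w t ^ ((i₂ : ℕ) + N₂ - (j₂ : ℕ)) / w t ^ N₂ with hcoef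
    set G : Matrix (Fin N₁) (Fin (r + 1)) ℂ := fun c s =>
      if (s : ℕ) < r then (w s ^ N₂) ^ (c : ℕ) else (if (c : ℕ) = 0 then 1 else 0) with hG
    set H : Matrix (Fin (r + 1)) (Fin N₂ × Fin N₂) ℂ := fun s q =>
      if (s : ℕ) < r then α s * coef s q.1 q.2
      else F ⟨0, hN₁pos⟩ q - ∑ t ∈ Finset.range r, α t * coef t q.1 q.2 with hH
    have hFGH : F = G * H := by
      ext c ⟨i₂, j₂⟩
      rw [Matrix.mul_apply, Fin.sum_univ_castSucc]
      have hc1 : ∀ s : Fin r, G c s.castSucc * H s.castSucc (i₂, j₂)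
          = (w s ^ N₂) ^ (c : ℕ) * (α s * coef s i₂ j₂) := by
        intro s
        have hs : ((s.castSucc : Fin (r + 1)) : ℕ) < r := s.isLt
        rw [hG, hH]
        simp [Fin.coe_castSucc, s.isLt]
      have hc2 : G c (Fin.last r) = (if (c : ℕ) = 0 then 1 else 0) := by
        rw [hG]; simp
      have hc3 : H (Fin.last r) (i₂, j₂)
          = F ⟨0, hN₁pos⟩ (i₂, j₂) - ∑ t ∈ Finset.range r, α t * coef t i₂ j₂ := by
        rw [hH]; simp
      rw [Finset.sum_congr rfl (fun s _ => hc1 s), hc2, hc3]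
      rw [Fin.sum_univ_eq_sum_range (fun s => (w s ^ N₂) ^ (c : ℕ) * (α s * coef s i₂ j₂)) r]
      by_cases hc0 : (c : ℕ) = 0
      · rw [if_pos hc0]
        have hcc : c = ⟨0, hN₁pos⟩ := Fin.ext hc0
        rw [hcc]
        have hsum : ∀ t ∈ Finset.range r,
            (w t ^ N₂) ^ (((⟨0, hN₁pos⟩ : Fin N₁)) : ℕ) * (α t * coef t i₂ j₂)
            = α t * coef t i₂ j₂ := by
          intro t _
          simp
        rw [Finset.sum_congr rfl hsum]
        ring
      · rw [if_neg hc0, zero_mul, add_zero, hF]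
        refine Finset.sum_congr rfl fun t _ => ?_
        have hcge : 1 ≤ (c : ℕ) := by omega
        have hclt : (c : ℕ) < N₁ := c.isLt
        simp only [hEdef, hcoef]
        by_cases hij : (j₂ : ℕ) ≤ (i₂ : ℕ)
        · simp only [if_pos hij]
          rw [← pow_mul, mul_comm N₂ (c : ℕ), pow_add]
          ring
        · simp only [if_neg hij]
          have hmod : ((c : ℕ) + N₁ - 1) % N₁ = (c : ℕ) - 1 := by
            have h1 : (c : ℕ) + N₁ - 1 = (c : ℕ) - 1 + N₁ := by omega
            rw [h1, Nat.add_mod_right, Nat.mod_eq_of_lt (by omega)]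
          rw [hmod]
          obtain ⟨c', hc'⟩ : ∃ c', (c : ℕ) = c' + 1 := ⟨(c : ℕ) - 1, by omega⟩
          rw [hc']
          simp only [Nat.add_sub_cancel]
          have hj₂lt : (j₂ : ℕ) < N₂ := j₂.isLt
          by_cases hw : w t = 0
          · rw [hw, zero_pow (by omega : N₂ ≠ 0), zero_pow (by omega : c' + 1 ≠ 0),
              zero_pow (by omega : c' * N₂ + ((i₂ : ℕ) + N₂ - (j₂ : ℕ)) ≠ 0)]
            ring
          · rw [pow_succ, div_eq_mul_inv]
            have h1 : (w t ^ N₂) ^ c' * w t ^ N₂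
                  * (α t * (w t ^ ((i₂ : ℕ) + N₂ - (j₂ : ℕ)) * (w t ^ N₂)⁻¹))
                = α t * ((w t ^ N₂) ^ c' * w t ^ ((i₂ : ℕ) + N₂ - (j₂ : ℕ)))
                  * (w t ^ N₂ * (w t ^ N₂)⁻¹) := by ring
            rw [h1, mul_inv_cancel₀ (pow_ne_zero _ hw), mul_one, ← pow_mul,
              mul_comm N₂ c', pow_add]
    rw [hBPF, hFGH]
    calc (P * (G * H)).rank ≤ (G * H).rank := Matrix.rank_mul_le_right _ _
      _ ≤ H.rank := Matrix.rank_mul_le_right _ _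
      _ ≤ Fintype.card (Fin (r + 1)) := Matrix.rank_le_card_height H
      _ = r + 1 := by simp
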